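/- Assume k : ℝⁿ → H is continuous. Let T > 0, let γ : [0,T] → ℝⁿ be continuous, and let Γ_γ ∈ H be the occupation kernel of γ. Then for every x ∈ ℝⁿ: (ι Γ_γ)(x) = ∫₀ᵀ K(x, γ t) dt, where K(x,y) = ⟪k y, k x⟫; equivalently, Γ_γ = ∫₀ᵀ k(γ t) dt as a Bochner integral in H. -/

import Mathlib

open scoped RealInnerProductSpace

/-- Integral representation of the occupation kernel: pointwise,
`(ι Γ)(x) = ∫₀ᵀ K(x, γ t) dt` with `K(x,y) = ⟪k y, k x⟫`; equivalently, `Γ` is the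
Bochner integral `∫₀ᵀ k (γ t) dt` in `H`. -/
theorem occupation_kernel_integral_representation
    {n : ℕ} (hn : 1 ≤ n) {H : Type*} [NormedAddCommGroup H] [InnerProductSpace ℝ H]
    [CompleteSpace H]
    (ι : H →ₗ[ℝ] (EuclideanSpace ℝ (Fin n) → ℝ)) (hι : Function.Injective ι)
    (k : EuclideanSpace ℝ (Fin n) → H)
    (hrep : ∀ (g : H) (x : EuclideanSpace ℝ (Fin n)), ι g x = ⟪g, k x⟫)
    (hk : Continuous k)
    (T : ℝ) (hT : 0 < T)
    (γ : ℝ → EuclideanSpace ℝ (Fin n)) (hγ : ContinuousOn γ (Set.Icc 0 T))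
    (Γ : H) (hΓ : ∀ g : H, ⟪g, Γ⟫ = ∫ t in (0:ℝ)..T, ι g (γ t)) :
    (∀ x : EuclideanSpace ℝ (Fin n), ι Γ x = ∫ t in (0:ℝ)..T, ⟪k (γ t), k x⟫) ∧
      Γ = ∫ t in (0:ℝ)..T, k (γ t) := by
  have hkγ : ContinuousOn (fun t => k (γ t)) (Set.Icc 0 T) := hk.comp_continuousOn hγ
  have hint : IntervalIntegrable (fun t => k (γ t)) MeasureTheory.volume 0 T := by
    apply ContinuousOn.intervalIntegrable
    rwa [Set.uIcc_of_le hT.le]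
  have key : Γ = ∫ t in (0:ℝ)..T, k (γ t) := by
    apply ext_inner_left ℝ
    intro g
    rw [hΓ g, show (inner ℝ g (∫ t in (0:ℝ)..T, k (γ t)) : ℝ) = innerSL ℝ g (∫ t in (0:ℝ)..T, k (γ t)) from rfl,
      ← (innerSL ℝ g).intervalIntegral_comp_comm hint]
    congr 1
    ext t
    exact hrep g (γ t)
  refine ⟨fun x => ?_, key⟩
  rw [hrep Γ x, key, real_inner_comm,
    show (inner ℝ (k x) (∫ t in (0:ℝ)..T, k (γ t)) : ℝ) = innerSL ℝ (k x) (∫ t in (0:ℝ)..T, k (γ t)) from rfl,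
    ← (innerSL ℝ (k x)).intervalIntegral_comp_comm hint]
  congr 1
  ext t
  exact real_inner_comm _ _
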